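/- For the polynomial flag-convex curve Γ(t) = L_0 · exp(t N_0), where N_0 is lower triangular nilpotent with positive subdiagonal entries and zeros elsewhere and L_0 ∈ Lo_n^1, the entry of Γ(t) in position (i,j) with i > j is a polynomial in t of degree exactly i − j, and the function m_k(t) = det(swminor(Γ(t), k)) is a polynomial in t of degree exactly k(n−k). -/

import Mathlib

open Matrix

variable (n : ℕ)

/-- Lower triangular with unit diagonal (`Lo_n^1`). -/
def unitri (L : Matrix (Fin n) (Fin n) ℝ) : Prop :=
  (∀ i, L i i = 1) ∧ ∀ i j : Fin n, (i : ℕ) < (j : ℕ) → L i j = 0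

/-- The southwest `k × k` minor: submatrix of the last `k` rows, first `k` columns. -/
def swminor (L : Matrix (Fin n) (Fin n) ℝ) (k : ℕ) (hk : k ≤ n) :
    Matrix (Fin k) (Fin k) ℝ :=
  L.submatrix (fun i : Fin k => (⟨n - k + (i : ℕ), by have := i.isLt; omega⟩ : Fin n))
    (fun j : Fin k => (⟨(j : ℕ), by have := j.isLt; omega⟩ : Fin n))

open Polynomial in
private lemma coeff_prod_sum' {ι : Type*} (s : Finset ι) (f : ι → Polynomial ℝ) (d : ι → ℕ)
    (h : ∀ i ∈ s, (f i).natDegree ≤ d i) :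
    (∏ i ∈ s, f i).coeff (∑ i ∈ s, d i) = ∏ i ∈ s, (f i).coeff (d i) := by
  induction s using Finset.cons_induction with
  | empty => simp
  | cons a s ha ih =>
    rw [Finset.prod_cons, Finset.sum_cons,
      Polynomial.coeff_mul_add_eq_of_natDegree_le (h a (Finset.mem_cons_self a s))
        ((Polynomial.natDegree_prod_le s f).trans
          (Finset.sum_le_sum fun i hi => h i (Finset.mem_cons_of_mem hi))),
      ih (fun i hi => h i (Finset.mem_cons_of_mem hi)), Finset.prod_cons]

open Polynomial in
private lemma aux_key {n : ℕ} (e : Fin n → Fin n → ℝ)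
    (hezero : ∀ l j : Fin n, (l:ℕ) < (j:ℕ) → e l j = 0)
    (P : Matrix (Fin n) (Fin n) (Polynomial ℝ))
    (hdeg : ∀ i j : Fin n, (P i j).natDegree ≤ (i:ℕ) - (j:ℕ))
    (hcoeffB : ∀ i j : Fin n, (j:ℕ) ≤ (i:ℕ) → (P i j).coeff ((i:ℕ) - (j:ℕ)) = e i j)
    (hzeroP : ∀ i j : Fin n, (i:ℕ) < (j:ℕ) → P i j = 0)
    (k : ℕ) (hk1 : 1 ≤ k) (hk2 : k ≤ n - 1)
    (r : Fin k → Fin n) (hr : ∀ i : Fin k, (r i : ℕ) = n - k + (i:ℕ))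
    (c : Fin k → Fin n) (hc : ∀ j : Fin k, (c j : ℕ) = (j:ℕ))
    (A : Matrix (Fin k) (Fin k) ℝ) (hA : ∀ i j, A i j = e (r i) (c j)) :
    ((P.submatrix r c).det).degree ≤ (k * (n - k) : ℕ) ∧
    ((P.submatrix r c).det).coeff (k * (n - k)) = A.det := by
  set D : ℕ := k * (n - k) with hD
  have key : ∀ σ : Equiv.Perm (Fin k),
      (∏ i, P (r (σ i)) (c i)).natDegree ≤ D ∧
      (∏ i, P (r (σ i)) (c i)).coeff D = ∏ i, A (σ i) i := by
    intro σ
    by_cases hall : ∀ i : Fin k, (i:ℕ) ≤ n - k + (σ i : ℕ)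
    · have hsum : ∑ i : Fin k, ((n - k + (σ i : ℕ)) - (i:ℕ)) = D := by
        have h1 : ∀ i : Fin k, (((n - k + (σ i : ℕ)) - (i:ℕ) : ℕ) : ℤ)
            = ((n - k : ℕ) : ℤ) + ((σ i : ℕ) : ℤ) - ((i:ℕ) : ℤ) := by
          intro i; have := hall i; omega
        have hinj := @Nat.cast_injective ℤ _ _
        apply hinj
        rw [Nat.cast_sum, Finset.sum_congr rfl fun i _ => h1 i]
        have h3 : ∑ i : Fin k, ((σ i : ℕ) : ℤ) = ∑ i : Fin k, ((i : ℕ) : ℤ) :=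
          Equiv.sum_comp σ (fun i : Fin k => ((i : ℕ) : ℤ))
        rw [Finset.sum_sub_distrib, Finset.sum_add_distrib, h3, add_sub_cancel_right,
          Finset.sum_const, Finset.card_univ, Fintype.card_fin, nsmul_eq_mul, hD]
        push_cast
        ring
      have hdi : ∀ i : Fin k, (P (r (σ i)) (c i)).natDegree ≤ (n - k + (σ i : ℕ)) - (i:ℕ) := by
        intro i
        have := hdeg (r (σ i)) (c i)
        rwa [hr, hc] at this
      constructor
      · exact (Polynomial.natDegree_prod_le _ _).trans
          (le_of_le_of_eq (Finset.sum_le_sum fun i _ => hdi i) hsum)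
      · rw [← hsum, coeff_prod_sum' _ _ _ (fun i _ => hdi i)]
        refine Finset.prod_congr rfl fun i _ => ?_
        have hci : (c i : ℕ) ≤ (r (σ i) : ℕ) := by rw [hr, hc]; exact hall i
        have h5 := hcoeffB (r (σ i)) (c i) hci
        rw [hr, hc] at h5
        rw [h5, hA]
    · push_neg at hall
      obtain ⟨i₀, hi₀⟩ := hall
      have hP0 : P (r (σ i₀)) (c i₀) = 0 := by
        apply hzeroP
        rw [hr, hc]; omega
      have hprod : (∏ i, P (r (σ i)) (c i)) = 0 :=
        Finset.prod_eq_zero (Finset.mem_univ i₀) hP0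
      have hA0 : (∏ i, A (σ i) i) = 0 := by
        apply Finset.prod_eq_zero (Finset.mem_univ i₀)
        rw [hA]
        apply hezero
        rw [hr, hc]; omega
      rw [hprod, hA0]
      simp
  constructor
  · rw [Matrix.det_apply']
    refine (Polynomial.degree_sum_le _ _).trans (Finset.sup_le fun σ _ => ?_)
    rw [← Polynomial.natDegree_le_iff_degree_le]
    refine (Polynomial.natDegree_mul_le).trans ?_
    simp only [Matrix.submatrix_apply]
    have := (key σ).1
    simpa using this
  · rw [Matrix.det_apply', Polynomial.finset_sum_coeff, Matrix.det_apply']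
    refine Finset.sum_congr rfl fun σ _ => ?_
    simp only [Matrix.submatrix_apply]
    rw [show ((Equiv.Perm.sign σ : ℤ) : Polynomial ℝ) = Polynomial.C ((Equiv.Perm.sign σ : ℤ) : ℝ)
      from (map_intCast (Polynomial.C : ℝ →+* Polynomial ℝ) _).symm, Polynomial.coeff_C_mul, (key σ).2]

open Polynomial in
private lemma aux_detA {n : ℕ} (N₀ : Matrix (Fin n) (Fin n) ℝ)
    (hN₀ : ∀ i j : Fin n,
      ((i : ℕ) = (j : ℕ) + 1 → 0 < N₀ i j) ∧ ((i : ℕ) ≠ (j : ℕ) + 1 → N₀ i j = 0))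
    (e : Fin n → Fin n → ℝ)
    (he : e = fun (l j : Fin n) => if (j:ℕ) ≤ (l:ℕ) then
      (N₀ ^ ((l:ℕ) - (j:ℕ))) l j * ((Nat.factorial ((l:ℕ)-(j:ℕ)) : ℝ))⁻¹ else 0)
    (k : ℕ) (hk1 : 1 ≤ k) (hk2 : k ≤ n - 1)
    (r : Fin k → Fin n) (hr : ∀ i : Fin k, (r i : ℕ) = n - k + (i:ℕ))
    (c : Fin k → Fin n) (hc : ∀ j : Fin k, (c j : ℕ) = (j:ℕ))
    (A : Matrix (Fin k) (Fin k) ℝ) (hA : ∀ i j, A i j = e (r i) (c j)) :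
    A.det ≠ 0 := by
  classical
  -- subdiagonal entries as a function on ℕ
  set a : ℕ → ℝ := fun m => if h : m + 1 < n then N₀ ⟨m+1, h⟩ ⟨m, by omega⟩ else 1 with ha
  have hapos : ∀ m, 0 < a m := by
    intro m
    rw [ha]
    dsimp only
    split
    · exact (hN₀ _ _).1 rfl
    · norm_num
  -- product formula for powers
  have hNprod : ∀ (m : ℕ) (i j : Fin n), (i:ℕ) = (j:ℕ) + m →
      (N₀ ^ m) i j = ∏ mm ∈ Finset.Ico (j:ℕ) (i:ℕ), a mm := by
    intro m
    induction m with
    | zero =>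
      intro i j hij
      have : i = j := Fin.ext (by omega)
      rw [pow_zero, this, Matrix.one_apply_eq, Finset.Ico_self, Finset.prod_empty]
    | succ m ih =>
      intro i j hij
      have hj : (j:ℕ) + 1 < n := by have := i.isLt; omega
      set j' : Fin n := ⟨(j:ℕ)+1, hj⟩ with hj'
      have hsum : (N₀ ^ (m+1)) i j = (N₀ ^ m) i j' * N₀ j' j := by
        rw [pow_succ, Matrix.mul_apply]
        apply Finset.sum_eq_single_of_mem j' (Finset.mem_univ _)
        intro l _ hl
        have hlc : (l:ℕ) ≠ (j:ℕ)+1 := fun hcc => hl (Fin.ext (by simp [hj', hcc]))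
        rw [(hN₀ l j).2 hlc, mul_zero]
      have haj : N₀ j' j = a (j:ℕ) := by
        rw [ha]
        dsimp only
        rw [dif_pos hj]
      have hjv : (j' : ℕ) = (j:ℕ) + 1 := rfl
      rw [hsum, ih i j' (by simp [hj']; omega), haj, hjv, mul_comm]
      exact (Finset.prod_eq_prod_Ico_succ_bot (by omega : (j:ℕ) < (i:ℕ)) a).symm
  -- cumulative products
  set F : ℕ → ℝ := fun x => ∏ m ∈ Finset.range x, a m with hF
  have hFpos : ∀ x, 0 < F x := fun x => Finset.prod_pos fun m _ => hapos m
  have hFdiv : ∀ x y : ℕ, y ≤ x → ∏ m ∈ Finset.Ico y x, a m = F x / F y := by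
    intro x y hyx
    rw [eq_div_iff (hFpos y).ne', hF]
    dsimp only
    rw [mul_comm, Finset.range_eq_Ico,
      Finset.prod_Ico_consecutive a (Nat.zero_le y) hyx, Finset.range_eq_Ico]
  -- scalar factors
  set u : Fin k → ℝ := fun i => F (n - k + (i:ℕ)) * ((Nat.factorial (n - k + (i:ℕ)) : ℝ))⁻¹ with hu
  set w : Fin k → ℝ := fun j => (F (j:ℕ))⁻¹ with hw
  set B : Matrix (Fin k) (Fin k) ℝ :=
    fun i j => (Nat.descFactorial (n - k + (i:ℕ)) (j:ℕ) : ℝ) with hB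
  have hAfact : A = Matrix.of (fun i j => u i * Matrix.of (fun i j : Fin k => w j * B i j) i j) := by
    ext i j
    rw [hA, he]
    dsimp only [Matrix.of_apply]
    rw [hr, hc, hu, hw, hB]
    dsimp only
    by_cases hij : (j:ℕ) ≤ n - k + (i:ℕ)
    · rw [if_pos hij, hNprod _ _ _ (by rw [hr, hc]; omega)]
      rw [hr, hc, hFdiv _ _ hij]
      have hfmd := Nat.factorial_mul_descFactorial hij
      have hfmd' : ((n - k + (i:ℕ) - (j:ℕ)).factorial : ℝ)
          * (Nat.descFactorial (n - k + (i:ℕ)) (j:ℕ) : ℝ)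
          = ((n - k + (i:ℕ)).factorial : ℝ) := by exact_mod_cast congrArg Nat.cast hfmd
      have h1 : ((n - k + (i:ℕ) - (j:ℕ)).factorial : ℝ) ≠ 0 := by positivity
      have h2 : ((n - k + (i:ℕ)).factorial : ℝ) ≠ 0 := by positivity
      have h3 : (F (j:ℕ)) ≠ 0 := (hFpos _).ne'
      field_simp
      linear_combination (-(F (n - k + (i:ℕ)))) * hfmd'
    · rw [if_neg hij, Nat.descFactorial_of_lt (by omega)]
      simp
  have hdetB : B.det ≠ 0 := by
    have hBP : B = Matrix.of (fun i j : Fin k =>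
        (descPochhammer ℝ (j:ℕ)).eval (((n - k + (i:ℕ) : ℕ) : ℝ))) := by
      ext i j
      rw [hB]
      dsimp only [Matrix.of_apply]
      rw [descPochhammer_eval_eq_descFactorial]
    rw [hBP, ← Matrix.det_eval_matrixOfPolynomials_eq_det_vandermonde
      (fun i : Fin k => ((n - k + (i:ℕ) : ℕ) : ℝ)) (fun j : Fin k => descPochhammer ℝ (j:ℕ))
      (fun j => descPochhammer_natDegree ℝ (j:ℕ)) (fun j => monic_descPochhammer ℝ (j:ℕ))]
    rw [Matrix.det_vandermonde_ne_zero_iff]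
    intro i i' hii'
    have h5 : ((n - k + (i:ℕ) : ℕ) : ℝ) = ((n - k + (i':ℕ) : ℕ) : ℝ) := hii'
    have h6 : (n - k + (i:ℕ) : ℕ) = (n - k + (i':ℕ) : ℕ) := by exact_mod_cast h5
    exact Fin.ext (by omega)
  rw [hAfact, Matrix.det_mul_column, Matrix.det_mul_row]
  refine mul_ne_zero ?_ (mul_ne_zero ?_ hdetB)
  · apply Finset.prod_ne_zero_iff.mpr
    intro i _
    rw [hu]
    dsimp only
    exact mul_ne_zero (hFpos _).ne' (inv_ne_zero (by positivity))
  · apply Finset.prod_ne_zero_iff.mpr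
    intro j _
    rw [hw]
    exact inv_ne_zero (hFpos _).ne'

open Polynomial in
/-- for `Γ(t) = L_0 exp(t N_0)` with `N_0` having positive subdiagonal
entries and zeros elsewhere and `L_0 ∈ Lo_n^1`, the `(i,j)`-entry with `i > j` is a
polynomial in `t` of degree exactly `i-j`, and `m_k(t) = det(swminor(Γ(t),k))` is a
polynomial of degree exactly `k(n-k)`. -/
theorem polynomial_curve_degrees (L₀ N₀ : Matrix (Fin n) (Fin n) ℝ)
    (hL₀ : unitri n L₀)
    (hN₀ : ∀ i j : Fin n,
      ((i : ℕ) = (j : ℕ) + 1 → 0 < N₀ i j) ∧ ((i : ℕ) ≠ (j : ℕ) + 1 → N₀ i j = 0)) :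
    (∀ i j : Fin n, (j : ℕ) < (i : ℕ) →
      ∃ p : Polynomial ℝ, p.degree = ((i : ℕ) - (j : ℕ) : ℕ) ∧
        ∀ t : ℝ, (L₀ * NormedSpace.exp (t • N₀)) i j = p.eval t) ∧
    (∀ (k : ℕ) (hk1 : 1 ≤ k) (hk2 : k ≤ n - 1),
      ∃ q : Polynomial ℝ, q.degree = (k * (n - k) : ℕ) ∧
        ∀ t : ℝ,
          (swminor n (L₀ * NormedSpace.exp (t • N₀)) k (by omega)).det = q.eval t) := by
  classical
  obtain ⟨hdiag, hupper⟩ := hL₀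
  -- entries of powers of N₀
  have hNpow : ∀ (m : ℕ) (i j : Fin n),
      ((i:ℕ) ≠ (j:ℕ) + m → (N₀ ^ m) i j = 0) ∧ ((i:ℕ) = (j:ℕ) + m → 0 < (N₀ ^ m) i j) := by
    intro m
    induction m with
    | zero =>
      intro i j
      constructor
      · intro h
        rw [pow_zero, Matrix.one_apply_ne (fun hc => h (by rw [hc]; omega))]
      · intro h
        have : i = j := Fin.ext (by omega)
        rw [pow_zero, this, Matrix.one_apply_eq]; norm_num
    | succ m ih =>
      intro i j
      rw [pow_succ]
      by_cases hj : (j:ℕ) + 1 < n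
      · set j' : Fin n := ⟨(j:ℕ)+1, hj⟩ with hj'
        have hsum : (N₀ ^ m * N₀) i j = (N₀ ^ m) i j' * N₀ j' j := by
          rw [Matrix.mul_apply]
          apply Finset.sum_eq_single_of_mem j' (Finset.mem_univ _)
          intro l _ hl
          have hlc : (l:ℕ) ≠ (j:ℕ)+1 := fun hc => hl (Fin.ext (by simp [hj', hc]))
          rw [(hN₀ l j).2 hlc, mul_zero]
        have hjv : (j' : ℕ) = (j:ℕ) + 1 := rfl
        have hpos : 0 < N₀ j' j := (hN₀ j' j).1 hjv
        constructor
        · intro h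
          rw [hsum, (ih i j').1 (by omega), zero_mul]
        · intro h
          rw [hsum]
          exact mul_pos ((ih i j').2 (by omega)) hpos
      · constructor
        · intro _
          rw [Matrix.mul_apply]
          apply Finset.sum_eq_zero
          intro l _
          have := l.isLt
          rw [(hN₀ l j).2 (by omega), mul_zero]
        · intro h
          have := i.isLt
          omega
  -- the coefficient function of the exponential entries
  set e : Fin n → Fin n → ℝ := fun (l j : Fin n) => if (j:ℕ) ≤ (l:ℕ) then
      (N₀ ^ ((l:ℕ) - (j:ℕ))) l j * ((Nat.factorial ((l:ℕ)-(j:ℕ)) : ℝ))⁻¹ else 0 with he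
  have hepos : ∀ l j : Fin n, (j:ℕ) ≤ (l:ℕ) → 0 < e l j := by
    intro l j h
    rw [he]
    dsimp only
    rw [if_pos h]
    exact mul_pos ((hNpow _ l j).2 (by omega))
      (inv_pos.mpr (Nat.cast_pos.mpr (Nat.factorial_pos _)))
  have hezero : ∀ l j : Fin n, (l:ℕ) < (j:ℕ) → e l j = 0 := by
    intro l j h
    rw [he]
    dsimp only
    rw [if_neg (by omega)]
  -- entries of the exponential
  have hN0m : ∀ m, n ≤ m → N₀ ^ m = 0 := by
    intro m hm
    ext i j
    rw [Matrix.zero_apply]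
    exact (hNpow m i j).1 (by have := i.isLt; have := j.isLt; omega)
  have hexp : ∀ (t : ℝ) (l j : Fin n),
      NormedSpace.exp (t • N₀) l j = e l j * t ^ ((l:ℕ) - (j:ℕ)) := by
    intro t l j
    have h1 : NormedSpace.exp (t • N₀)
        = ∑ m ∈ Finset.range n, (m.factorial⁻¹ : ℝ) • (t • N₀) ^ m := by
      rw [NormedSpace.exp_eq_tsum ℝ]
      exact tsum_eq_sum (fun m hm => by
        rw [_root_.smul_pow, hN0m m (by simpa using hm), smul_zero, smul_zero])
    rw [h1]
    have h2 : ∀ m : ℕ, ((m.factorial⁻¹ : ℝ) • (t • N₀) ^ m) l j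
        = (m.factorial⁻¹ : ℝ) * (t ^ m * (N₀ ^ m) l j) := by
      intro m
      rw [_root_.smul_pow]
      simp [Matrix.smul_apply, smul_eq_mul]
    rw [Matrix.sum_apply]
    simp_rw [h2]
    by_cases hlj : (j:ℕ) ≤ (l:ℕ)
    · rw [Finset.sum_eq_single_of_mem ((l:ℕ) - (j:ℕ))
        (Finset.mem_range.mpr (by have := l.isLt; omega))]
      · rw [he]; simp only [if_pos hlj]; ring
      · intro m _ hm
        rw [(hNpow m l j).1 (by omega), mul_zero, mul_zero]
    · rw [Finset.sum_eq_zero, he]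
      · simp [hlj]
      · intro m _
        rw [(hNpow m l j).1 (by omega), mul_zero, mul_zero]
  -- the polynomial matrix
  set P : Matrix (Fin n) (Fin n) (Polynomial ℝ) := fun (i j : Fin n) =>
      ∑ l : Fin n, Polynomial.C (L₀ i l * e l j) * Polynomial.X ^ ((l:ℕ) - (j:ℕ)) with hP
  have hcoeff : ∀ (i j : Fin n) (m : ℕ), (P i j).coeff m
      = ∑ l : Fin n, if (l:ℕ) - (j:ℕ) = m then L₀ i l * e l j else 0 := by
    intro i j m
    rw [hP]
    simp only [finset_sum_coeff, coeff_C_mul, coeff_X_pow]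
    exact Finset.sum_congr rfl fun l _ => by split <;> simp_all [eq_comm]
  have hPeval : ∀ (t : ℝ) (i j : Fin n),
      (L₀ * NormedSpace.exp (t • N₀)) i j = (P i j).eval t := by
    intro t i j
    rw [Matrix.mul_apply, hP]
    simp only [eval_finset_sum, eval_mul, eval_pow, eval_C, eval_X]
    exact Finset.sum_congr rfl fun l _ => by rw [hexp t l j]; ring
  have hdegP : ∀ i j : Fin n, (P i j).natDegree ≤ (i:ℕ) - (j:ℕ) := by
    intro i j
    rw [natDegree_le_iff_coeff_eq_zero]
    intro m hm
    rw [hcoeff]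
    apply Finset.sum_eq_zero
    intro l _
    split
    · rename_i hl
      have hli : (i:ℕ) < (l:ℕ) := by omega
      rw [hupper i l hli, zero_mul]
    · rfl
  have hcoeffB : ∀ i j : Fin n, (j:ℕ) ≤ (i:ℕ) → (P i j).coeff ((i:ℕ) - (j:ℕ)) = e i j := by
    intro i j hji
    rw [hcoeff]
    rw [Finset.sum_eq_single_of_mem i (Finset.mem_univ _)]
    · rw [if_pos rfl, hdiag, one_mul]
    · intro l _ hl
      split
      · rename_i h
        have hlj : (l:ℕ) < (j:ℕ) := by
          rcases Nat.lt_or_ge (l:ℕ) (j:ℕ) with h' | h'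
          · exact h'
          · exact absurd (Fin.ext (show (l:ℕ) = (i:ℕ) by omega)) hl
        rw [hezero l j hlj, mul_zero]
      · rfl
  have hzeroP : ∀ i j : Fin n, (i:ℕ) < (j:ℕ) → P i j = 0 := by
    intro i j hij
    have h0 : (P i j).natDegree ≤ (i:ℕ) - (j:ℕ) := hdegP i j
    have h1 : (i:ℕ) - (j:ℕ) = 0 := by omega
    rw [h1] at h0
    have h2 : (P i j).coeff 0 = 0 := by
      rw [hcoeff]
      apply Finset.sum_eq_zero
      intro l _
      split
      · rcases Nat.lt_or_ge (l:ℕ) (j:ℕ) with h' | h'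
        · rw [hezero l j h', mul_zero]
        · rw [hupper i l (by omega), zero_mul]
      · rfl
    rw [eq_C_of_natDegree_le_zero h0, h2, map_zero]
  refine ⟨?_, ?_⟩
  · -- part 1
    intro i j hji
    refine ⟨P i j, ?_, fun t => hPeval t i j⟩
    exact Polynomial.degree_eq_of_le_of_coeff_ne_zero
      (Polynomial.natDegree_le_iff_degree_le.mp (hdegP i j))
      (by rw [hcoeffB i j hji.le]; exact (hepos i j hji.le).ne')
  · -- part 2
    intro k hk1 hk2
    set r : Fin k → Fin n := fun i => ⟨n - k + (i : ℕ), by have := i.isLt; omega⟩ with hrdef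
    set c : Fin k → Fin n := fun j => ⟨(j : ℕ), by have := j.isLt; omega⟩ with hcdef
    have hr : ∀ i : Fin k, (r i : ℕ) = n - k + (i:ℕ) := fun i => rfl
    have hc : ∀ j : Fin k, (c j : ℕ) = (j:ℕ) := fun j => rfl
    obtain ⟨hQdeg, hQcoeff⟩ := aux_key (e := e) hezero P hdegP hcoeffB hzeroP k hk1 hk2 r hr c hc
      (fun i j => e (r i) (c j)) (fun _ _ => rfl)
    have hdetA : (Matrix.of (fun i j : Fin k => e (r i) (c j))).det ≠ 0 :=
      aux_detA N₀ hN₀ e he k hk1 hk2 r hr c hc _ (fun _ _ => rfl)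
    refine ⟨(P.submatrix r c).det, ?_, ?_⟩
    · exact Polynomial.degree_eq_of_le_of_coeff_ne_zero hQdeg
        (by rw [hQcoeff]; exact hdetA)
    · intro t
      have hmap : swminor n (L₀ * NormedSpace.exp (t • N₀)) k (by omega)
          = (P.submatrix r c).map (Polynomial.evalRingHom t) := by
        ext i j
        simp only [swminor, Matrix.submatrix_apply, Matrix.map_apply, Polynomial.coe_evalRingHom]
        exact hPeval t _ _
      have hdet := RingHom.map_det (Polynomial.evalRingHom t) (P.submatrix r c)
      rw [RingHom.mapMatrix_apply] at hdet
      rw [hmap, ← hdet]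
      simp
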